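/- arXiv:1604.01199 — 2 statements merged into one kernel-verified Lean document; each statement's English description precedes it below -/
import Mathlib

section
/- For every A ⊆ E: r'(A ∪ {a, γ}) = r(A) + 1 if e ∈ cl(A), and r'(A ∪ {a, γ}) = r(A) + 2 if e ∉ cl(A). -/
open Set

namespace ESSplit

variable {α : Type*}

/-- A circuit of a matroid: a minimal dependent set. -/
def IsCircuit (M : Matroid α) (C : Set α) : Prop :=
  M.Dep C ∧ ∀ D, D ⊂ C → M.Indep D

/-- A binary matroid: one representable over GF(2). -/
def IsBinary (M : Matroid α) : Prop :=
  ∃ (n : ℕ) (φ : α → (Fin n → ZMod 2)),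
    ∀ I, I ⊆ M.E → (M.Indep I ↔ LinearIndependent (ZMod 2) (fun x : I => φ x.1))

/-- An OX-circuit: a circuit meeting `X` in an odd number of elements. -/
def IsOX (M : Matroid α) (X C : Set α) : Prop :=
  IsCircuit M C ∧ Odd (C ∩ X).ncard

/-- An EX-circuit: a circuit meeting `X` in an even number of elements. -/
def IsEX (M : Matroid α) (X C : Set α) : Prop :=
  IsCircuit M C ∧ Even (C ∩ X).ncard

/-- `D` is a union of two disjoint OX-circuits containing no EX-circuit. -/
def OXUnion (M : Matroid α) (X D : Set α) : Prop :=
  ∃ C₁ C₂, IsOX M X C₁ ∧ IsOX M X C₂ ∧ Disjoint C₁ C₂ ∧ D = C₁ ∪ C₂ ∧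
    ¬ ∃ C₀, IsEX M X C₀ ∧ C₀ ⊆ D

/-- The description of the circuits of the es-splitting matroid `M_X^e`. -/
def ESCircuit (M : Matroid α) (X : Set α) (e a γ : α) (C : Set α) : Prop :=
  C = {e, a, γ} ∨
  IsEX M X C ∨
  (OXUnion M X C ∧ ∀ D, OXUnion M X D → D ⊆ C → D = C) ∨
  (∃ C₀, IsOX M X C₀ ∧ C = C₀ ∪ {a}) ∨
  (∃ C₀, IsOX M X C₀ ∧ e ∉ C₀ ∧ C = C₀ ∪ {e, γ}) ∨
  (∃ C₀, IsOX M X C₀ ∧ e ∈ C₀ ∧ C = (C₀ \ {e}) ∪ {γ}) ∨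
  (∃ C₀, IsCircuit M C₀ ∧ e ∈ C₀ ∧ Odd (((C₀ \ {e}) ∩ X).ncard) ∧
      C = (C₀ \ {e}) ∪ {a, γ})

/-- `M'` is the es-splitting matroid `M_X^e` of `M` (with new elements `a`, `γ`):
it has ground set `M.E ∪ {a, γ}` and its circuits are exactly as described. -/
def IsESSplit (M M' : Matroid α) (X : Set α) (e a γ : α) : Prop :=
  M'.E = M.E ∪ {a, γ} ∧ ∀ C, IsCircuit M' C ↔ ESCircuit M X e a γ C

/-- The set `T(A)`. -/
def T (M : Matroid α) (X : Set α) (e : α) (A : Set α) : Set α :=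
  {x | x ∈ M.E \ A ∧ x ≠ e ∧ ∃ C, IsOX M X C ∧ x ∈ C ∧ e ∈ C ∧ C ⊆ A ∪ {e, x}}

/-- The set `F(A)`. -/
def F (M : Matroid α) (X A : Set α) : Set α :=
  {x | x ∈ M.closure A \ A ∧ ∃ C, IsOX M X C ∧ x ∈ C ∧ C ⊆ M.closure A}

/-- The rank of a set `A` in a (finite) matroid: the maximum size of an
independent subset of `A`. -/
noncomputable def rk (M : Matroid α) (A : Set α) : ℕ :=
  sSup {n | ∃ I, M.Indep I ∧ I ⊆ A ∧ I.ncard = n}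

end ESSplit

open ESSplit

namespace ESSplit

variable {N : Matroid α} {C C₁ C₂ D I J S B B₁ B₂ Y : Set α} {x z : α}

lemma IsCircuit.subset_ground' (h : IsCircuit N C) : C ⊆ N.E := h.1.subset_ground

lemma IsCircuit.not_subset_indep (h : IsCircuit N C) (hJ : N.Indep J) (hCJ : C ⊆ J) : False :=
  h.1.not_indep (hJ.subset hCJ)

lemma exists_circuit_subset_of_dep (hfin : N.E.Finite) (hD : N.Dep D) :
    ∃ C, IsCircuit N C ∧ C ⊆ D := by
  obtain ⟨n, hn⟩ : ∃ n, D.ncard = n := ⟨_, rfl⟩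
  induction n using Nat.strong_induction_on generalizing D with
  | _ n IH =>
    by_cases h : ∀ D', D' ⊂ D → N.Indep D'
    · exact ⟨D, ⟨hD, h⟩, subset_rfl⟩
    · push_neg at h
      obtain ⟨D', hss, hdep⟩ := h
      have hD'E : D' ⊆ N.E := hss.subset.trans hD.subset_ground
      have hD' : N.Dep D' := Matroid.dep_of_not_indep hdep hD'E
      obtain ⟨C, hC, hsub⟩ := IH D'.ncard
        (hn ▸ Set.ncard_lt_ncard hss (hfin.subset hD.subset_ground)) hD' rfl
      exact ⟨C, hC, hsub.trans hss.subset⟩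

lemma IsCircuit.eq_of_subset (h1 : IsCircuit N C₁) (h2 : IsCircuit N C₂) (hss : C₁ ⊆ C₂) :
    C₁ = C₂ := by
  by_contra hne
  exact (h2.2 C₁ (hss.ssubset_of_ne hne)).not_dep h1.1

lemma basis_ncard_eq (h1 : N.IsBasis B₁ Y) (h2 : N.IsBasis B₂ Y) : B₁.ncard = B₂.ncard :=
  h1.isBase_restrict.ncard_eq_ncard_of_isBase h2.isBase_restrict

lemma indep_ncard_le_basis (hfin : N.E.Finite) (hI : N.Indep I) (hIY : I ⊆ Y)
    (hB : N.IsBasis B Y) : I.ncard ≤ B.ncard := by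
  obtain ⟨B', hB', hIB'⟩ := hI.subset_isBasis_of_subset hIY hB.subset_ground
  exact (Set.ncard_le_ncard hIB' (hfin.subset hB'.indep.subset_ground)).trans
    (basis_ncard_eq hB' hB).le

lemma circuit_elimination (hfin : N.E.Finite) (h1 : IsCircuit N C₁) (h2 : IsCircuit N C₂)
    (hne : C₁ ≠ C₂) (hz1 : z ∈ C₁) (hz2 : z ∈ C₂) :
    ∃ Z, IsCircuit N Z ∧ Z ⊆ (C₁ ∪ C₂) \ {z} := by
  obtain ⟨f, hf2, hf1⟩ : ∃ f, f ∈ C₂ ∧ f ∉ C₁ := by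
    by_contra h
    push_neg at h
    exact hne ((h2.eq_of_subset h1 h).symm)
  have hYE : C₁ ∪ C₂ ⊆ N.E := Set.union_subset h1.subset_ground' h2.subset_ground'
  have hYfin : (C₁ ∪ C₂).Finite := hfin.subset hYE
  have hC2ne : C₂ \ {f} ≠ C₂ := by
    intro h; rw [← h] at hf2; exact hf2.2 rfl
  have hC2f : N.Indep (C₂ \ {f}) := h2.2 _ (Set.diff_subset.ssubset_of_ne hC2ne)
  obtain ⟨B, hB, hsubB⟩ := hC2f.subset_isBasis_of_subset
    (Set.diff_subset.trans Set.subset_union_right) hYE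
  have hfB : f ∉ B := by
    intro hfB
    refine h2.not_subset_indep hB.indep (fun y hy => ?_)
    by_cases hyf : y = f
    · exact hyf ▸ hfB
    · exact hsubB ⟨hy, hyf⟩
  obtain ⟨g, hg1, hgB⟩ : ∃ g ∈ C₁, g ∉ B := by
    by_contra h
    push_neg at h
    exact h1.not_subset_indep hB.indep h
  have hgf : g ≠ f := fun h => hf1 (h ▸ hg1)
  have hBsub : B ⊆ (C₁ ∪ C₂) \ {f, g} := by
    intro y hy
    refine ⟨hB.subset hy, ?_⟩
    intro hmem
    simp only [Set.mem_insert_iff, Set.mem_singleton_iff] at hmem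
    rcases hmem with rfl | rfl
    · exact hfB hy
    · exact hgB hy
  have hfgY : ({f, g} : Set α) ⊆ C₁ ∪ C₂ := by
    intro y hy
    simp only [Set.mem_insert_iff, Set.mem_singleton_iff] at hy
    rcases hy with rfl | rfl
    · exact Or.inr hf2
    · exact Or.inl hg1
  have hfg : ({f, g} : Set α).ncard = 2 := by
    rw [Set.ncard_insert_of_notMem (by simpa using hgf.symm) (Set.finite_singleton g),
      Set.ncard_singleton]
  have hcard2 : ((C₁ ∪ C₂) \ ({f, g} : Set α)).ncard + ({f, g} : Set α).ncard
      = (C₁ ∪ C₂).ncard := Set.ncard_diff_add_ncard_of_subset hfgY hYfin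
  have hBle : B.ncard ≤ ((C₁ ∪ C₂) \ ({f, g} : Set α)).ncard :=
    Set.ncard_le_ncard hBsub hYfin.diff
  have hdep : N.Dep ((C₁ ∪ C₂) \ {z}) := by
    have hsubE : (C₁ ∪ C₂) \ {z} ⊆ N.E := Set.diff_subset.trans hYE
    refine Matroid.dep_of_not_indep (fun hind => ?_) hsubE
    have h1' := indep_ncard_le_basis hfin hind Set.diff_subset hB
    have h2' : ((C₁ ∪ C₂) \ {z}).ncard + 1 = (C₁ ∪ C₂).ncard :=
      Set.ncard_diff_singleton_add_one (Set.mem_union_left _ hz1) hYfin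
    rw [hfg] at hcard2
    omega
  exact exists_circuit_subset_of_dep hfin hdep

lemma exists_circuit_of_mem_closure (hfin : N.E.Finite) (hS : S ⊆ N.E)
    (hx : x ∈ N.closure S) (hxS : x ∉ S) :
    ∃ C, IsCircuit N C ∧ x ∈ C ∧ C ⊆ insert x S := by
  obtain ⟨I, hI⟩ := N.exists_isBasis S hS
  have hxI : x ∈ N.closure I := by rwa [hI.closure_eq_closure]
  have hdep : N.Dep (insert x I) :=
    hI.indep.insert_dep_iff.mpr ⟨hxI, fun h => hxS (hI.subset h)⟩
  obtain ⟨C, hC, hsub⟩ := exists_circuit_subset_of_dep hfin hdep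
  have hxC : x ∈ C := by
    by_contra hxC
    exact hC.not_subset_indep hI.indep (fun y hy =>
      (Set.mem_insert_iff.mp (hsub hy)).resolve_left (fun h => hxC (h ▸ hy)))
  exact ⟨C, hC, hxC, hsub.trans (Set.insert_subset_insert hI.subset)⟩

lemma mem_closure_of_circuit (hC : IsCircuit N C) (hxC : x ∈ C) (hsub : C ⊆ insert x S)
    (hS : S ⊆ N.E) : x ∈ N.closure S := by
  have hne : C \ {x} ≠ C := fun h => by rw [← h] at hxC; exact hxC.2 rfl
  have hind : N.Indep (C \ {x}) := hC.2 _ (Set.diff_subset.ssubset_of_ne hne)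
  have heq : insert x (C \ {x}) = C := by
    rw [Set.insert_diff_singleton, Set.insert_eq_of_mem hxC]
  have hdep : N.Dep (insert x (C \ {x})) := by rw [heq]; exact hC.1
  have hx := (hind.insert_dep_iff.mp hdep).1
  refine N.closure_subset_closure (fun y hy => ?_) hx
  rcases Set.mem_insert_iff.mp (hsub hy.1) with h | h
  · exact absurd h hy.2
  · exact h

lemma rk_eq_of_forall {N : Matroid α} {Y : Set α} {k : ℕ}
    (h1 : ∃ I, N.Indep I ∧ I ⊆ Y ∧ I.ncard = k)
    (h2 : ∀ I, N.Indep I → I ⊆ Y → I.ncard ≤ k) : rk N Y = k := by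
  have hbdd : BddAbove {n | ∃ I, N.Indep I ∧ I ⊆ Y ∧ I.ncard = n} :=
    ⟨k, fun n hn => by obtain ⟨I, hI, hIY, rfl⟩ := hn; exact h2 I hI hIY⟩
  refine le_antisymm (csSup_le ⟨k, h1⟩ ?_) (le_csSup hbdd h1)
  rintro n ⟨I, hI, hIY, rfl⟩
  exact h2 I hI hIY

lemma ncard_inter_insert_parity {C₀ X : Set α} {e : α} (hfin : C₀.Finite)
    (heC : e ∈ C₀) (heX : e ∈ X) :
    (C₀ ∩ X).ncard = ((C₀ \ {e}) ∩ X).ncard + 1 := by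
  have hset : C₀ ∩ X = insert e ((C₀ \ {e}) ∩ X) := by
    ext y
    simp only [Set.mem_inter_iff, Set.mem_insert_iff, Set.mem_diff, Set.mem_singleton_iff]
    constructor
    · rintro ⟨hyC, hyX⟩
      by_cases hye : y = e
      · exact Or.inl hye
      · exact Or.inr ⟨⟨hyC, hye⟩, hyX⟩
    · rintro (rfl | ⟨⟨hyC, _⟩, hyX⟩)
      · exact ⟨heC, heX⟩
      · exact ⟨hyC, hyX⟩
  rw [hset, Set.ncard_insert_of_notMem (by simp) (hfin.diff.inter_of_left _)]

end ESSplit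


theorem rank_union_a_gamma_es_splitting
    {α : Type*} (M M' : Matroid α) (X : Set α) (e a γ : α)
    (hfin : M.E.Finite) (hbin : IsBinary M)
    (hXE : X ⊆ M.E) (heX : e ∈ X) (haE : a ∉ M.E) (hγE : γ ∉ M.E) (haγ : a ≠ γ)
    (hsplit : IsESSplit M M' X e a γ)
    (A : Set α) (hAE : A ⊆ M.E) :
    (e ∈ M.closure A → rk M' (A ∪ {a, γ}) = rk M A + 1) ∧
    (e ∉ M.closure A → rk M' (A ∪ {a, γ}) = rk M A + 2) := by
  obtain ⟨hgr, hcirc⟩ := hsplit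
  have heE : e ∈ M.E := hXE heX
  have hfin' : M'.E.Finite := by
    rw [hgr]; exact hfin.union (Set.Finite.insert _ (Set.finite_singleton _))
  -- circuit constructors for M'
  have hcirc_eag : IsCircuit M' {e, a, γ} := (hcirc _).mpr (Or.inl rfl)
  have hcirc_EX : ∀ C, IsCircuit M C → Even ((C ∩ X).ncard) → IsCircuit M' C :=
    fun C hC hev => (hcirc _).mpr (Or.inr (Or.inl ⟨hC, hev⟩))
  have hcirc_Oa : ∀ C, IsCircuit M C → Odd ((C ∩ X).ncard) → IsCircuit M' (C ∪ {a}) :=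
    fun C hC ho => (hcirc _).mpr (Or.inr (Or.inr (Or.inr (Or.inl ⟨C, ⟨hC, ho⟩, rfl⟩))))
  have hcirc_Oeγ : ∀ C, IsCircuit M C → Odd ((C ∩ X).ncard) → e ∉ C →
      IsCircuit M' (C ∪ {e, γ}) :=
    fun C hC ho he => (hcirc _).mpr
      (Or.inr (Or.inr (Or.inr (Or.inr (Or.inl ⟨C, ⟨hC, ho⟩, he, rfl⟩)))))
  have hcirc_Oγ : ∀ C, IsCircuit M C → Odd ((C ∩ X).ncard) → e ∈ C →
      IsCircuit M' ((C \ {e}) ∪ {γ}) :=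
    fun C hC ho he => (hcirc _).mpr
      (Or.inr (Or.inr (Or.inr (Or.inr (Or.inr (Or.inl ⟨C, ⟨hC, ho⟩, he, rfl⟩))))))
  have hcirc_aγ : ∀ C, IsCircuit M C → e ∈ C → Odd (((C \ {e}) ∩ X).ncard) →
      IsCircuit M' ((C \ {e}) ∪ {a, γ}) :=
    fun C hC he ho => (hcirc _).mpr
      (Or.inr (Or.inr (Or.inr (Or.inr (Or.inr (Or.inr ⟨C, hC, he, ho, rfl⟩))))))
  -- basis of A
  obtain ⟨B, hB⟩ := M.exists_isBasis A hAE
  have hBA : B ⊆ A := hB.subset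
  have hBE : B ⊆ M.E := hBA.trans hAE
  have hBfin : B.Finite := hfin.subset hBE
  have haB : a ∉ B := fun h => haE (hBE h)
  have hγB : γ ∉ B := fun h => hγE (hBE h)
  set r := B.ncard with hr
  have hrkA : rk M A = r := rk_eq_of_forall ⟨B, hB.indep, hBA, rfl⟩
    (fun I hI hIA => indep_ncard_le_basis hfin hI hIA hB)
  -- independence criterion for M'
  have hindep' : ∀ J : Set α, J ⊆ M'.E → (∀ C, IsCircuit M' C → ¬ C ⊆ J) → M'.Indep J := by
    intro J hJE h
    by_contra hni
    obtain ⟨C, hC, hsub⟩ := exists_circuit_subset_of_dep hfin'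
      (Matroid.dep_of_not_indep hni hJE)
    exact h C hC hsub
  -- a generic "ground part" extraction
  have hground_sub : ∀ (C W : Set α), C ⊆ M.E → W ⊆ M.E → C ⊆ insert a (insert γ W) →
      C ⊆ W := by
    intro C W hCE hWE h x hx
    rcases Set.mem_insert_iff.mp (h hx) with h1 | h'
    · exact absurd (h1 ▸ hCE hx) haE
    rcases Set.mem_insert_iff.mp h' with h1 | h1
    · exact absurd (h1 ▸ hCE hx) hγE
    · exact h1
  -- witness 1 : insert a B is always M'-independent
  have hwit1 : M'.Indep (insert a B) := by
    refine hindep' _ (Set.insert_subset (by rw [hgr]; exact Or.inr (Set.mem_insert _ _))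
      (hBE.trans (by rw [hgr]; exact Set.subset_union_left))) ?_
    intro C hC hsub
    have hsub2 : C ⊆ insert a (insert γ B) :=
      hsub.trans (Set.insert_subset_insert (Set.subset_insert _ _))
    have hγC : γ ∉ C := by
      intro h
      rcases Set.mem_insert_iff.mp (hsub h) with h' | h'
      · exact haγ h'.symm
      · exact hγE (hBE h')
    rcases (hcirc C).mp hC with h | h | h | h | h | h | h
    · exact hγC (by rw [h]; simp)
    · exact h.1.1.not_indep (hB.indep.subset
        (hground_sub C B h.1.1.subset_ground hBE hsub2))
    · obtain ⟨⟨C₁, C₂, hC₁, hC₂, hdisj, rfl, hnoEX⟩, hmin⟩ := h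
      exact hC₁.1.1.not_indep (hB.indep.subset (hground_sub C₁ B hC₁.1.1.subset_ground hBE
        (Set.subset_union_left.trans hsub2)))
    · obtain ⟨C₀, hC₀, rfl⟩ := h
      exact hC₀.1.1.not_indep (hB.indep.subset (hground_sub C₀ B hC₀.1.1.subset_ground hBE
        (Set.subset_union_left.trans hsub2)))
    · obtain ⟨C₀, hC₀, heC₀, rfl⟩ := h
      exact hγC (Set.mem_union_right _ (by simp))
    · obtain ⟨C₀, hC₀, heC₀, rfl⟩ := h
      exact hγC (Set.mem_union_right _ rfl)
    · obtain ⟨C₀, hC₀, heC₀, hodd, rfl⟩ := h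
      exact hγC (Set.mem_union_right _ (by simp))
  have hsz1 : (insert a B).ncard = r + 1 := Set.ncard_insert_of_notMem haB hBfin
  have hwit1sub : insert a B ⊆ A ∪ {a, γ} :=
    Set.insert_subset (Or.inr (Set.mem_insert _ _)) (fun y hy => Or.inl (hBA hy))
  -- witness 2 : when e ∉ cl(A)
  have hwit2 : e ∉ M.closure A → M'.Indep (insert a (insert γ B)) := by
    intro hecl
    have hBcl : M.closure B = M.closure A := hB.closure_eq_closure
    have heB : e ∉ B := fun h => hecl (by
      rw [← hBcl]; exact M.mem_closure_of_mem h hBE)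
    refine hindep' _ (Set.insert_subset (by rw [hgr]; exact Or.inr (Set.mem_insert _ _))
      (Set.insert_subset (by rw [hgr]; exact Or.inr (Set.mem_insert_of_mem _ rfl))
        (hBE.trans (by rw [hgr]; exact Set.subset_union_left)))) ?_
    intro C hC hsub
    rcases (hcirc C).mp hC with h | h | h | h | h | h | h
    · have he' : e ∈ insert a (insert γ B) := hsub (by rw [h]; simp)
      rcases Set.mem_insert_iff.mp he' with h1 | h'
      · exact haE (h1 ▸ heE)
      rcases Set.mem_insert_iff.mp h' with h1 | h1
      · exact hγE (h1 ▸ heE)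
      · exact heB h1
    · exact h.1.1.not_indep (hB.indep.subset
        (hground_sub C B h.1.1.subset_ground hBE hsub))
    · obtain ⟨⟨C₁, C₂, hC₁, hC₂, hdisj, rfl, hnoEX⟩, hmin⟩ := h
      exact hC₁.1.1.not_indep (hB.indep.subset (hground_sub C₁ B hC₁.1.1.subset_ground hBE
        (Set.subset_union_left.trans hsub)))
    · obtain ⟨C₀, hC₀, rfl⟩ := h
      exact hC₀.1.1.not_indep (hB.indep.subset (hground_sub C₀ B hC₀.1.1.subset_ground hBE
        (Set.subset_union_left.trans hsub)))
    · obtain ⟨C₀, hC₀, heC₀, rfl⟩ := h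
      exact hC₀.1.1.not_indep (hB.indep.subset (hground_sub C₀ B hC₀.1.1.subset_ground hBE
        (Set.subset_union_left.trans hsub)))
    · obtain ⟨C₀, hC₀, heC₀, rfl⟩ := h
      have hsub' : C₀ \ {e} ⊆ B := hground_sub _ _ (Set.diff_subset.trans
        hC₀.1.1.subset_ground) hBE (Set.subset_union_left.trans hsub)
      have hC₀B : C₀ ⊆ insert e B := by
        intro y hy
        by_cases hye : y = e
        · exact hye ▸ Set.mem_insert _ _
        · exact Set.mem_insert_of_mem _ (hsub' ⟨hy, hye⟩)
      exact hecl (hBcl ▸ mem_closure_of_circuit hC₀.1 heC₀ hC₀B hBE)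
    · obtain ⟨C₀, hC₀, heC₀, hodd, rfl⟩ := h
      have hsub' : C₀ \ {e} ⊆ B := hground_sub _ _ (Set.diff_subset.trans
        hC₀.subset_ground') hBE (Set.subset_union_left.trans hsub)
      have hC₀B : C₀ ⊆ insert e B := by
        intro y hy
        by_cases hye : y = e
        · exact hye ▸ Set.mem_insert _ _
        · exact Set.mem_insert_of_mem _ (hsub' ⟨hy, hye⟩)
      exact hecl (hBcl ▸ mem_closure_of_circuit hC₀ heC₀ hC₀B hBE)
  have hsz2 : (insert a (insert γ B)).ncard = r + 2 := by
    rw [Set.ncard_insert_of_notMem (by simp [haγ, haB]) (hBfin.insert γ),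
      Set.ncard_insert_of_notMem hγB hBfin]
  have hwit2sub : insert a (insert γ B) ⊆ A ∪ {a, γ} :=
    Set.insert_subset (Or.inr (Set.mem_insert _ _))
      (Set.insert_subset (Or.inr (Set.mem_insert_of_mem _ rfl))
        (fun y hy => Or.inl (hBA hy)))
  -- the upper bound
  have hupper : ∀ J, M'.Indep J → J ⊆ A ∪ {a, γ} →
      (J.ncard ≤ r + 2) ∧ (e ∈ M.closure A → J.ncard ≤ r + 1) := by
    intro J hJ hJsub
    set S := J \ {a, γ} with hSdef
    have hSA : S ⊆ A := by
      intro x hx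
      rcases hJsub hx.1 with h | h
      · exact h
      · exact absurd h hx.2
    have hSE : S ⊆ M.E := hSA.trans hAE
    have hSfin : S.Finite := hfin.subset hSE
    have hSJ : S ⊆ J := Set.diff_subset
    have hSr : ∀ T, M.Indep T → T ⊆ A → T.ncard ≤ r :=
      fun T hT hTA => indep_ncard_le_basis hfin hT hTA hB
    have hOX : ∀ C, IsCircuit M C → C ⊆ S → Odd ((C ∩ X).ncard) := by
      intro C hC hCS
      rcases Nat.even_or_odd (C ∩ X).ncard with hev | hodd
      · exact ((hcirc_EX C hC hev).not_subset_indep hJ (hCS.trans hSJ)).elim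
      · exact hodd
    have hind_a : a ∈ J → M.Indep S := by
      intro haJ
      by_contra hni
      obtain ⟨C, hC, hCS⟩ := exists_circuit_subset_of_dep hfin
        (Matroid.dep_of_not_indep hni hSE)
      exact (hcirc_Oa C hC (hOX C hC hCS)).not_subset_indep hJ
        (Set.union_subset (hCS.trans hSJ) (Set.singleton_subset_iff.mpr haJ))
    have hremove : M.Dep S → ∃ x ∈ S, M.Indep (S \ {x}) := by
      intro hdep
      obtain ⟨C, hC, hCS⟩ := exists_circuit_subset_of_dep hfin hdep
      obtain ⟨x, hxC⟩ := hC.1.nonempty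
      refine ⟨x, hCS hxC, ?_⟩
      by_contra hni
      obtain ⟨C₂, hC₂, hC₂S⟩ := exists_circuit_subset_of_dep hfin
        (Matroid.dep_of_not_indep hni (Set.diff_subset.trans hSE))
      have hCo := hOX C hC hCS
      have hC₂o := hOX C₂ hC₂ (hC₂S.trans Set.diff_subset)
      have hxa : x ≠ a := fun h => haE (h ▸ hSE (hCS hxC))
      have hne : C ∪ {a} ≠ C₂ ∪ {a} := by
        intro hEq
        have hx1 : x ∈ C ∪ {a} := Set.mem_union_left _ hxC
        rw [hEq] at hx1
        rcases hx1 with h | h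
        · exact (hC₂S h).2 rfl
        · exact hxa h
      obtain ⟨Z, hZ, hZsub⟩ := circuit_elimination hfin' (hcirc_Oa C hC hCo)
        (hcirc_Oa C₂ hC₂ hC₂o) hne (Set.mem_union_right _ rfl) (Set.mem_union_right _ rfl)
      refine hZ.not_subset_indep hJ (hZsub.trans ?_)
      intro y hy
      have hyne : y ∉ ({a} : Set α) := hy.2
      rcases hy.1 with (h | h) | (h | h)
      · exact hSJ (hCS h)
      · exact absurd h hyne
      · exact hSJ (hC₂S h).1
      · exact absurd h hyne
    have hγ_noe : γ ∈ J → ∀ C, IsCircuit M C → C ⊆ S → e ∉ C := by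
      intro hγJ C hC hCS heC
      exact (hcirc_Oγ C hC (hOX C hC hCS) heC).not_subset_indep hJ
        (Set.union_subset (Set.diff_subset.trans (hCS.trans hSJ))
          (Set.singleton_subset_iff.mpr hγJ))
    have hγ_dep : γ ∈ J → M.Dep S → e ∉ M.closure S := by
      intro hγJ hdep
      obtain ⟨C, hC, hCS⟩ := exists_circuit_subset_of_dep hfin hdep
      have heC : e ∉ C := hγ_noe hγJ C hC hCS
      have heS : e ∉ S := by
        intro heS
        refine (hcirc_Oeγ C hC (hOX C hC hCS) heC).not_subset_indep hJ
          (Set.union_subset (hCS.trans hSJ) ?_)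
        intro y hy
        rcases hy with rfl | rfl
        · exact hSJ heS
        · exact hγJ
      intro hecl
      obtain ⟨C₀, hC₀, heC₀, hC₀sub⟩ := exists_circuit_of_mem_closure hfin hSE hecl heS
      rcases Nat.even_or_odd (C₀ ∩ X).ncard with hev | hodd
      · have hC'e : IsCircuit M' (C ∪ {e, γ}) := hcirc_Oeγ C hC (hOX C hC hCS) heC
        have hC₀' : IsCircuit M' C₀ := hcirc_EX C₀ hC₀ hev
        have hne : C₀ ≠ C ∪ {e, γ} := by
          intro hEq
          have hγ' : γ ∈ C₀ := by rw [hEq]; exact Set.mem_union_right _ (by simp)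
          exact hγE (hC₀.subset_ground' hγ')
        obtain ⟨Z, hZ, hZsub⟩ := circuit_elimination hfin' hC₀' hC'e hne heC₀
          (Set.mem_union_right _ (by simp))
        refine hZ.not_subset_indep hJ (hZsub.trans ?_)
        intro y hy
        rcases hy.1 with h | h
        · rcases Set.mem_insert_iff.mp (hC₀sub h) with rfl | h'
          · exact absurd rfl hy.2
          · exact hSJ h'
        · rcases h with h | h
          · exact hSJ (hCS h)
          · rcases h with rfl | rfl
            · exact absurd rfl hy.2
            · exact hγJ
      · refine (hcirc_Oγ C₀ hC₀ hodd heC₀).not_subset_indep hJ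
          (Set.union_subset ?_ (Set.singleton_subset_iff.mpr hγJ))
        intro y hy
        rcases Set.mem_insert_iff.mp (hC₀sub hy.1) with h | h
        · exact absurd h hy.2
        · exact hSJ h
    have haγ_cl : a ∈ J → γ ∈ J → e ∉ M.closure S := by
      intro haJ hγJ hecl
      have heS : e ∉ S := by
        intro heS
        refine hcirc_eag.not_subset_indep hJ ?_
        intro y hy
        simp only [Set.mem_insert_iff, Set.mem_singleton_iff] at hy
        rcases hy with rfl | rfl | rfl
        · exact hSJ heS
        · exact haJ
        · exact hγJ
      obtain ⟨C₀, hC₀, heC₀, hC₀sub⟩ := exists_circuit_of_mem_closure hfin hSE hecl heS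
      have hpar := ncard_inter_insert_parity (hfin.subset hC₀.subset_ground') heC₀ heX
      have hd : C₀ \ {e} ⊆ J := by
        intro y hy
        rcases Set.mem_insert_iff.mp (hC₀sub hy.1) with h | h
        · exact absurd h hy.2
        · exact hSJ h
      rcases Nat.even_or_odd (((C₀ \ {e}) ∩ X).ncard) with hev | hodd
      · have ho : Odd ((C₀ ∩ X).ncard) := by rw [hpar]; exact Even.add_one hev
        exact (hcirc_Oγ C₀ hC₀ ho heC₀).not_subset_indep hJ
          (Set.union_subset hd (Set.singleton_subset_iff.mpr hγJ))
      · refine (hcirc_aγ C₀ hC₀ heC₀ hodd).not_subset_indep hJ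
          (Set.union_subset hd ?_)
        intro y hy
        rcases hy with rfl | rfl
        · exact haJ
        · exact hγJ
    have hstrict : ∀ T, M.Indep T → T ⊆ A → e ∈ M.closure A → e ∉ M.closure T →
        T.ncard + 1 ≤ r := by
      intro T hT hTA heclA heclT
      obtain ⟨B', hB', hTB'⟩ := hT.subset_isBasis_of_subset hTA hAE
      have hne : T ≠ B' := by
        intro hEq
        rw [hEq, hB'.closure_eq_closure] at heclT
        exact heclT heclA
      have hlt := Set.ncard_lt_ncard (hTB'.ssubset_of_ne hne)
        (hfin.subset hB'.indep.subset_ground)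
      have heq := basis_ncard_eq hB' hB
      omega
    have hJcard : J.ncard ≤ S.ncard + 2 := by
      have hsub : J ⊆ insert a (insert γ S) := by
        intro y hy
        by_cases h1 : y = a
        · exact h1 ▸ Set.mem_insert _ _
        by_cases h2 : y = γ
        · exact Set.mem_insert_of_mem _ (h2 ▸ Set.mem_insert _ _)
        · refine Set.mem_insert_of_mem _ (Set.mem_insert_of_mem _ ⟨hy, ?_⟩)
          intro hm
          rcases hm with rfl | rfl
          · exact h1 rfl
          · exact h2 rfl
      have g1 := Set.ncard_le_ncard hsub ((hSfin.insert γ).insert a)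
      have g2 := Set.ncard_insert_le a (insert γ S)
      have g3 := Set.ncard_insert_le γ S
      omega
    have hJcard1 : (a ∉ J ∨ γ ∉ J) → J.ncard ≤ S.ncard + 1 := by
      intro hcase
      rcases hcase with haJ | hγJ
      · have hsub : J ⊆ insert γ S := by
          intro y hy
          by_cases h2 : y = γ
          · exact h2 ▸ Set.mem_insert _ _
          · refine Set.mem_insert_of_mem _ ⟨hy, ?_⟩
            intro hm
            rcases hm with rfl | rfl
            · exact haJ hy
            · exact h2 rfl
        have g1 := Set.ncard_le_ncard hsub (hSfin.insert γ)
        have g3 := Set.ncard_insert_le γ S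
        omega
      · have hsub : J ⊆ insert a S := by
          intro y hy
          by_cases h2 : y = a
          · exact h2 ▸ Set.mem_insert _ _
          · refine Set.mem_insert_of_mem _ ⟨hy, ?_⟩
            intro hm
            rcases hm with rfl | rfl
            · exact h2 rfl
            · exact hγJ hy
        have g1 := Set.ncard_le_ncard hsub (hSfin.insert a)
        have g3 := Set.ncard_insert_le a S
        omega
    have hJcard0 : a ∉ J → γ ∉ J → J.ncard ≤ S.ncard := by
      intro haJ hγJ
      refine Set.ncard_le_ncard (fun y hy => ⟨hy, ?_⟩) hSfin
      intro hm
      rcases hm with rfl | rfl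
      · exact haJ hy
      · exact hγJ hy
    have hdepS_bound : M.Dep S → S.ncard ≤ r + 1 := by
      intro hdep
      obtain ⟨x, hxS, hind⟩ := hremove hdep
      have h1 := hSr _ hind (Set.diff_subset.trans hSA)
      have h2 := Set.ncard_diff_singleton_add_one hxS hSfin
      omega
    constructor
    · by_cases hSind : M.Indep S
      · have := hSr S hSind hSA
        omega
      · have haJ : a ∉ J := fun h => hSind (hind_a h)
        have h1 := hJcard1 (Or.inl haJ)
        have h2 := hdepS_bound (Matroid.dep_of_not_indep hSind hSE)
        omega
    · intro heclA
      by_cases haJ : a ∈ J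
      · have hSind := hind_a haJ
        by_cases hγJ : γ ∈ J
        · have := hstrict S hSind hSA heclA (haγ_cl haJ hγJ)
          omega
        · have h1 := hSr S hSind hSA
          have h2 := hJcard1 (Or.inr hγJ)
          omega
      · by_cases hγJ : γ ∈ J
        · have h2 := hJcard1 (Or.inl haJ)
          by_cases hSind : M.Indep S
          · have := hSr S hSind hSA
            omega
          · have hdep : M.Dep S := Matroid.dep_of_not_indep hSind hSE
            have hecl' := hγ_dep hγJ hdep
            obtain ⟨x, hxS, hind⟩ := hremove hdep
            have hecl'' : e ∉ M.closure (S \ {x}) :=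
              fun h => hecl' (M.closure_subset_closure Set.diff_subset h)
            have g1 := hstrict _ hind (Set.diff_subset.trans hSA) heclA hecl''
            have g2 := Set.ncard_diff_singleton_add_one hxS hSfin
            omega
        · have h0 := hJcard0 haJ hγJ
          by_cases hSind : M.Indep S
          · have := hSr S hSind hSA
            omega
          · have := hdepS_bound (Matroid.dep_of_not_indep hSind hSE)
            omega
  constructor
  · intro hecl
    rw [hrkA]
    exact rk_eq_of_forall ⟨insert a B, hwit1, hwit1sub, hsz1⟩
      (fun I hI hIY => (hupper I hI hIY).2 hecl)
  · intro hecl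
    rw [hrkA]
    exact rk_eq_of_forall ⟨insert a (insert γ B), hwit2 hecl, hwit2sub, hsz2⟩
      (fun I hI hIY => (hupper I hI hIY).1)
end

section
/- The rank of the es-splitting matroid M_X^e equals the rank of M plus one: r'(M_X^e) = r(M) + 1. -/
open Set

open ESSplit

namespace ESSplit

variable {α : Type*} {M : Matroid α} {C D : Set α}

lemma exists_circuit_of_dep' :
    ∀ (n : ℕ) (D : Set α), D.ncard ≤ n → D.Finite → M.Dep D →
      ∃ C, C ⊆ D ∧ IsCircuit M C := by
  intro n
  induction n with
  | zero =>
    intro D hn hfin hD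
    have hD0 : D = ∅ := by
      rw [← Set.ncard_eq_zero hfin]; omega
    subst hD0
    exact (M.empty_indep.not_dep hD).elim
  | succ n ih =>
    intro D hn hfin hD
    by_cases h : ∀ D', D' ⊂ D → M.Indep D'
    · exact ⟨D, subset_rfl, hD, h⟩
    · push_neg at h
      obtain ⟨D', hss, hni⟩ := h
      have hD' : M.Dep D' :=
        (Matroid.dep_iff).mpr ⟨hni, hss.subset.trans hD.subset_ground⟩
      have hlt : D'.ncard < D.ncard := Set.ncard_lt_ncard hss hfin
      obtain ⟨C, hCsub, hC⟩ := ih D' (by omega) (hfin.subset hss.subset) hD'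
      exact ⟨C, hCsub.trans hss.subset, hC⟩

lemma exists_circuit_of_dep (hfin : D.Finite) (hD : M.Dep D) :
    ∃ C, C ⊆ D ∧ IsCircuit M C :=
  exists_circuit_of_dep' D.ncard D le_rfl hfin hD

lemma mem_closure_of_circuit_s13 {x : α} (hC : IsCircuit M C) (hx : x ∈ C) :
    x ∈ M.closure (C \ {x}) := by
  have hss : C \ {x} ⊂ C := Set.sdiff_singleton_ssubset.mpr hx
  have hI : M.Indep (C \ {x}) := hC.2 _ hss
  refine hI.mem_closure_iff.mpr (Or.inl ?_)
  rw [Set.insert_diff_singleton, Set.insert_eq_of_mem hx]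
  exact hC.1

lemma rk_eq_ncard_base {B : Set α} (hfin : M.E.Finite) (hB : M.IsBase B) :
    rk M M.E = B.ncard := by
  have hBfin : B.Finite := hfin.subset hB.subset_ground
  have hub : ∀ n ∈ {n | ∃ I, M.Indep I ∧ I ⊆ M.E ∧ I.ncard = n}, n ≤ B.ncard := by
    rintro n ⟨I, hI, -, rfl⟩
    obtain ⟨B', hB', hIB'⟩ := hI.exists_isBase_superset
    have h1 : I.encard ≤ B.encard := by
      rw [← hB'.encard_eq_encard_of_isBase hB]
      exact Set.encard_mono hIB'
    rw [Set.ncard_def, Set.ncard_def]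
    exact ENat.toNat_le_toNat h1 hBfin.encard_lt_top.ne
  have hmem : B.ncard ∈ {n | ∃ I, M.Indep I ∧ I ⊆ M.E ∧ I.ncard = n} :=
    ⟨B, hB.indep, hB.subset_ground, rfl⟩
  exact le_antisymm (csSup_le ⟨_, hmem⟩ hub) (le_csSup ⟨B.ncard, hub⟩ hmem)

end ESSplit

theorem rank_ground_es_splitting
    {α : Type*} (M M' : Matroid α) (X : Set α) (e a γ : α)
    (hfin : M.E.Finite) (hbin : IsBinary M)
    (hXE : X ⊆ M.E) (heX : e ∈ X) (haE : a ∉ M.E) (hγE : γ ∉ M.E) (haγ : a ≠ γ)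
    (hsplit : IsESSplit M M' X e a γ) :
    rk M' M'.E = rk M M.E + 1 := by
  obtain ⟨hE', hcirc⟩ := hsplit
  obtain ⟨B, hB⟩ := M.exists_isBase
  have hBE : B ⊆ M.E := hB.subset_ground
  have hBfin : B.Finite := hfin.subset hBE
  have haB : a ∉ B := fun h => haE (hBE h)
  have hγB : γ ∉ B := fun h => hγE (hBE h)
  have heE : e ∈ M.E := hXE heX
  set S : Set α := insert a B with hS
  have hγS : γ ∉ S := by
    rintro (rfl | h)
    · exact haγ rfl
    · exact hγB h
  have hSE : S ⊆ M'.E := by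
    rw [hE']
    rintro x (rfl | h)
    · exact Or.inr (Or.inl rfl)
    · exact Or.inl (hBE h)
  have hE'fin : M'.E.Finite := by
    rw [hE']
    exact hfin.union ((Set.finite_singleton γ).insert a)
  have hSfin : S.Finite := hBfin.insert a
  -- any circuit of M contained in S is a contradiction
  have hMcirc : ∀ C₀, IsCircuit M C₀ → ¬ C₀ ⊆ S := by
    intro C₀ hC₀ hsub
    have hC₀E : C₀ ⊆ M.E := hC₀.1.subset_ground
    have hC₀B : C₀ ⊆ B := by
      intro x hx
      rcases hsub hx with rfl | h
      · exact (haE (hC₀E hx)).elim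
      · exact h
    exact (hB.indep.subset hC₀B).not_dep hC₀.1
  -- S is independent in M'
  have hSindep : M'.Indep S := by
    by_contra hni
    have hdep : M'.Dep S := (Matroid.dep_iff).mpr ⟨hni, hSE⟩
    obtain ⟨C', hC'S, hC'⟩ := exists_circuit_of_dep hSfin hdep
    rcases (hcirc C').mp hC' with h | h | h | h | h | h | h
    · exact hγS (hC'S (h ▸ (by simp : γ ∈ ({e, a, γ} : Set α))))
    · exact hMcirc C' h.1 hC'S
    · obtain ⟨C₁, C₂, hC₁, _, _, rfl, _⟩ := h.1
      exact hMcirc C₁ hC₁.1 ((Set.subset_union_left).trans hC'S)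
    · obtain ⟨C₀, hC₀, rfl⟩ := h
      exact hMcirc C₀ hC₀.1 ((Set.subset_union_left).trans hC'S)
    · obtain ⟨C₀, _, _, rfl⟩ := h
      exact hγS (hC'S (Or.inr (Or.inr rfl)))
    · obtain ⟨C₀, _, _, rfl⟩ := h
      exact hγS (hC'S (Or.inr rfl))
    · obtain ⟨C₀, _, _, _, rfl⟩ := h
      exact hγS (hC'S (Or.inr (Or.inr rfl)))
  -- every element of M.E is in the M'-closure of S
  have hclE : ∀ x ∈ M.E, x ∈ M'.closure S := by
    intro x hxE
    by_cases hxB : x ∈ B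
    · exact M'.subset_closure S hSE (Or.inr hxB)
    · have hdep : M.Dep (insert x B) := hB.insert_dep ⟨hxE, hxB⟩
      obtain ⟨C, hCsub, hC⟩ := exists_circuit_of_dep (hBfin.insert x) hdep
      have hxC : x ∈ C := by
        by_contra hxC
        have hCB : C ⊆ B := fun y hy => ((hCsub hy).resolve_left
          (fun h => hxC (h ▸ hy)))
        exact (hB.indep.subset hCB).not_dep hC.1
      have hCxB : C \ {x} ⊆ B := fun y hy =>
        ((hCsub hy.1).resolve_left hy.2)
      have hxa : x ≠ a := fun h => haE (h ▸ hxE)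
      rcases Nat.even_or_odd (C ∩ X).ncard with hev | hod
      · have hC' : IsCircuit M' C := (hcirc C).mpr (Or.inr (Or.inl ⟨hC, hev⟩))
        have := mem_closure_of_circuit_s13 hC' hxC
        exact M'.closure_subset_closure (hCxB.trans (Set.subset_insert a B)) this
      · have hC' : IsCircuit M' (C ∪ {a}) :=
          (hcirc (C ∪ {a})).mpr (Or.inr (Or.inr (Or.inr (Or.inl ⟨C, ⟨hC, hod⟩, rfl⟩))))
        have hmem : x ∈ C ∪ {a} := Or.inl hxC
        have hsub2 : (C ∪ {a}) \ {x} ⊆ S := by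
          rintro y ⟨hy | rfl, hyx⟩
          · exact Or.inr (hCxB ⟨hy, hyx⟩)
          · exact Or.inl rfl
        have := mem_closure_of_circuit_s13 hC' hmem
        exact M'.closure_subset_closure hsub2 this
  -- γ is in the closure as well
  have hΔ : IsCircuit M' {e, a, γ} := (hcirc _).mpr (Or.inl rfl)
  have hγcl : γ ∈ M'.closure S := by
    have hγΔ : γ ∈ ({e, a, γ} : Set α) := Or.inr (Or.inr rfl)
    have h1 := mem_closure_of_circuit_s13 hΔ hγΔ
    have h2 : ({e, a, γ} : Set α) \ {γ} ⊆ M'.closure S := by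
      rintro y ⟨hy, hyγ⟩
      rcases hy with rfl | rfl | rfl
      · exact hclE y heE
      · exact M'.subset_closure S hSE (Or.inl rfl)
      · exact (hyγ rfl).elim
    exact Matroid.closure_subset_closure_of_subset_closure h2 h1
  have hspan : M'.E ⊆ M'.closure S := by
    rw [hE']
    rintro x (hx | rfl | rfl)
    · exact hclE x hx
    · exact M'.subset_closure S hSE (Or.inl rfl)
    · exact hγcl
  have hSbase : M'.IsBase S := hSindep.isBase_of_ground_subset_closure hspan
  rw [rk_eq_ncard_base hE'fin hSbase, rk_eq_ncard_base hfin hB,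
    Set.ncard_insert_of_notMem haB hBfin]
end
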